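/- Let (Ω, μ) be a probability space, N ≥ 1, and for each i ∈ {1,…,N} and b ∈ {0,1} let A_i(b) : Ω → ℝ be a measurable function taking only the values −1 and 1. Let c : {0,…,2^N−1} → {−1,1} and define a_k := ∑_{j=0}^{2^N−1} (−1)^{⟨j,k⟩₂} c_j for 0 ≤ k ≤ 2^N−1. Then |∑_{k=0}^{2^N−1} a_k · ∫_Ω ∏_{i=1}^N A_i(k_i) dμ| ≤ 2^N, where k = (k_1,…,k_N)_2 is the binary expansion of k with N digits k_i ∈ {0,1}. -/
import Mathlib


open MeasureTheory

/-- `ip N j k` counts the binary positions `i < N` where both `j` and `k` have digit 1;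
`(-1) ^ ip N j k` realizes `(-1)^⟨j,k⟩₂`. -/
def ip (N j k : ℕ) : ℕ := ∑ i ∈ Finset.range N, (if j.testBit i ∧ k.testBit i then 1 else 0)

lemma sum_range_add' {M : Type*} [AddCommMonoid M] (f : ℕ → M) (m n : ℕ) :
    ∑ i ∈ Finset.range (m + n), f i
      = ∑ i ∈ Finset.range m, f i + ∑ i ∈ Finset.range n, f (m + i) := by
  rw [Finset.range_eq_Ico,
    ← Finset.sum_Ico_consecutive _ (Nat.zero_le m) (Nat.le_add_right m n),
    Finset.sum_Ico_eq_sum_range]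
  simp [Finset.sum_Ico_eq_sum_range, Nat.add_sub_cancel_left]

lemma ip_succ (n j k : ℕ) :
    ip (n + 1) j k = ip n j k + (if j.testBit n ∧ k.testBit n then 1 else 0) := by
  unfold ip; exact Finset.sum_range_succ _ n

lemma ip_eq_of_bits (n j k k' : ℕ) (h : ∀ i < n, k.testBit i = k'.testBit i) :
    ip n j k = ip n j k' := by
  unfold ip
  exact Finset.sum_congr rfl fun i hi => by
    rw [h i (Finset.mem_range.mp hi)]

/-- Key expansion identity. -/
lemma key1 (N j : ℕ) (f : ℕ → Bool → ℝ) :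
    ∑ k ∈ Finset.range (2 ^ N),
        (-1 : ℝ) ^ ip N j k * ∏ i ∈ Finset.range N, f i (k.testBit i)
      = ∏ i ∈ Finset.range N,
          (f i false + (-1 : ℝ) ^ (if j.testBit i then 1 else 0) * f i true) := by
  induction N with
  | zero => simp [ip]
  | succ n ih =>
    have h2 : (2 : ℕ) ^ (n + 1) = 2 ^ n + 2 ^ n := by ring
    rw [h2, sum_range_add']
    have hbit : ∀ k < 2 ^ n, ∀ i < n, (2 ^ n + k).testBit i = k.testBit i := by
      intro k hk i hi
      exact Nat.testBit_two_pow_add_gt hi k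
    have hsum1 : ∀ k ∈ Finset.range (2 ^ n),
        (-1 : ℝ) ^ ip (n+1) j k * ∏ i ∈ Finset.range (n+1), f i (k.testBit i)
          = ((-1 : ℝ) ^ ip n j k * ∏ i ∈ Finset.range n, f i (k.testBit i)) * f n false := by
      intro k hk
      rw [Finset.mem_range] at hk
      have hb : k.testBit n = false := Nat.testBit_eq_false_of_lt hk
      rw [ip_succ, Finset.prod_range_succ, hb]
      simp
      ring
    have hsum2 : ∀ k ∈ Finset.range (2 ^ n),
        (-1 : ℝ) ^ ip (n+1) j (2 ^ n + k) * ∏ i ∈ Finset.range (n+1), f i ((2 ^ n + k).testBit i)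
          = ((-1 : ℝ) ^ ip n j k * ∏ i ∈ Finset.range n, f i (k.testBit i)) *
              ((-1 : ℝ) ^ (if j.testBit n then 1 else 0) * f n true) := by
      intro k hk
      rw [Finset.mem_range] at hk
      have hb : (2 ^ n + k).testBit n = true := by
        rw [Nat.testBit_two_pow_add_eq, Nat.testBit_eq_false_of_lt hk]
        rfl
      have hip : ip n j (2 ^ n + k) = ip n j k :=
        ip_eq_of_bits n j _ _ (fun i hi => hbit k hk i hi)
      rw [ip_succ, hip, Finset.prod_range_succ, hb]
      have hprod : ∏ i ∈ Finset.range n, f i ((2 ^ n + k).testBit i)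
          = ∏ i ∈ Finset.range n, f i (k.testBit i) :=
        Finset.prod_congr rfl fun i hi => by rw [hbit k hk i (Finset.mem_range.mp hi)]
      rw [hprod, pow_add]
      by_cases hj : j.testBit n <;> simp [hj] <;> ring
    rw [Finset.sum_congr rfl hsum1, Finset.sum_congr rfl hsum2,
      ← Finset.sum_mul, ← Finset.sum_mul, ih, Finset.prod_range_succ]
    ring

/-- Key pointwise sum-of-absolute-values identity. -/
lemma key2 (N : ℕ) (x y : ℕ → ℝ) :
    ∑ j ∈ Finset.range (2 ^ N),
        |∏ i ∈ Finset.range N, (x i + (-1 : ℝ) ^ (if j.testBit i then 1 else 0) * y i)|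
      = ∏ i ∈ Finset.range N, (|x i + y i| + |x i - y i|) := by
  induction N with
  | zero => simp
  | succ n ih =>
    have h2 : (2 : ℕ) ^ (n + 1) = 2 ^ n + 2 ^ n := by ring
    rw [h2, sum_range_add']
    have hs1 : ∀ j ∈ Finset.range (2 ^ n),
        |∏ i ∈ Finset.range (n+1), (x i + (-1 : ℝ) ^ (if j.testBit i then 1 else 0) * y i)|
          = |∏ i ∈ Finset.range n, (x i + (-1 : ℝ) ^ (if j.testBit i then 1 else 0) * y i)| *
              |x n + y n| := by
      intro j hj
      rw [Finset.mem_range] at hj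
      have hb : j.testBit n = false := Nat.testBit_eq_false_of_lt hj
      rw [Finset.prod_range_succ, abs_mul, hb]
      simp
    have hs2 : ∀ j ∈ Finset.range (2 ^ n),
        |∏ i ∈ Finset.range (n+1),
            (x i + (-1 : ℝ) ^ (if (2 ^ n + j).testBit i then 1 else 0) * y i)|
          = |∏ i ∈ Finset.range n, (x i + (-1 : ℝ) ^ (if j.testBit i then 1 else 0) * y i)| *
              |x n - y n| := by
      intro j hj
      rw [Finset.mem_range] at hj
      have hb : (2 ^ n + j).testBit n = true := by
        rw [Nat.testBit_two_pow_add_eq, Nat.testBit_eq_false_of_lt hj]; rfl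
      have hprod : ∏ i ∈ Finset.range n,
            (x i + (-1 : ℝ) ^ (if (2 ^ n + j).testBit i then 1 else 0) * y i)
          = ∏ i ∈ Finset.range n, (x i + (-1 : ℝ) ^ (if j.testBit i then 1 else 0) * y i) :=
        Finset.prod_congr rfl fun i hi => by
          rw [Nat.testBit_two_pow_add_gt (Finset.mem_range.mp hi) j]
      rw [Finset.prod_range_succ, abs_mul, hb, hprod]
      norm_num
      left
      ring
    rw [Finset.sum_congr rfl hs1, Finset.sum_congr rfl hs2,
      ← Finset.sum_mul, ← Finset.sum_mul, ih, Finset.prod_range_succ]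
    ring

/-- On a probability space, for `±1`-valued measurable observables
`A i b` (`i` a site, `b ∈ {0,1}` an observable choice) and Bell coefficients
`a k = ∑_j (-1)^⟨j,k⟩₂ c j` built from a `±1`-valued `c`, the Bell expression
`|∑_k a_k ∫ ∏_i A_i(k_i) dμ|` is bounded by `2^N`, where `k_i` is the `i`-th binary
digit of `k`. -/
theorem stmt1 {Ω : Type*} [MeasurableSpace Ω] (μ : Measure Ω) [IsProbabilityMeasure μ]
    (N : ℕ) (hN : 1 ≤ N)
    (A : Fin N → Fin 2 → Ω → ℝ)
    (hmeas : ∀ i b, Measurable (A i b))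
    (hval : ∀ i b ω, A i b ω = 1 ∨ A i b ω = -1)
    (c : ℕ → ℤ) (hc : ∀ j < 2 ^ N, c j = 1 ∨ c j = -1)
    (a : ℕ → ℤ)
    (ha : ∀ k < 2 ^ N, a k = ∑ j ∈ Finset.range (2 ^ N), (-1 : ℤ) ^ ip N j k * c j) :
    |∑ k ∈ Finset.range (2 ^ N),
        (a k : ℝ) * ∫ ω, (∏ i : Fin N, A i (if k.testBit i.val then 1 else 0) ω) ∂μ|
      ≤ 2 ^ N := by
  -- the product observable
  set P : ℕ → Ω → ℝ := fun k ω => ∏ i : Fin N, A i (if k.testBit i.val then 1 else 0) ω with hP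
  have hPmeas : ∀ k, Measurable (P k) := fun k =>
    Finset.measurable_prod _ fun i _ => hmeas _ _
  have hPbound : ∀ k ω, |P k ω| ≤ 1 := by
    intro k ω
    have : ∀ i : Fin N, |A i (if k.testBit i.val then 1 else 0) ω| = 1 := by
      intro i
      rcases hval i (if k.testBit i.val then 1 else 0) ω with h | h <;> rw [h] <;> norm_num
    refine le_of_eq ?_
    calc |P k ω| = ∏ i : Fin N, |A i (if k.testBit i.val then 1 else 0) ω| := by
          rw [hP]; exact Finset.abs_prod _ _
      _ = 1 := by simp [this]
  have hPint : ∀ k, Integrable (P k) μ := by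
    intro k
    refine (integrable_const (1 : ℝ)).mono' (hPmeas k).aestronglyMeasurable ?_
    filter_upwards with ω
    simpa using hPbound k ω
  set G : ℕ → Ω → ℝ := fun j ω => ∑ k ∈ Finset.range (2 ^ N), (-1 : ℝ) ^ ip N j k * P k ω
    with hGdef
  have hGint : ∀ j, Integrable (G j) μ :=
    fun j => integrable_finset_sum _ fun k _ => (hPint k).const_mul _
  have hIG : ∀ j, ∫ ω, G j ω ∂μ
      = ∑ k ∈ Finset.range (2 ^ N), (-1 : ℝ) ^ ip N j k * ∫ ω, P k ω ∂μ := by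
    intro j
    rw [hGdef]
    rw [integral_finset_sum _ fun k _ => (hPint k).const_mul _]
    exact Finset.sum_congr rfl fun k _ => integral_const_mul _ _
  have hcabs : ∀ j ∈ Finset.range (2 ^ N), |(c j : ℝ)| = 1 := by
    intro j hj
    rcases hc j (Finset.mem_range.mp hj) with h | h <;> rw [h] <;> norm_num
  -- pointwise identity
  have hpoint : ∀ ω, ∑ j ∈ Finset.range (2 ^ N), |G j ω| = (2 : ℝ) ^ N := by
    intro ω
    set f : ℕ → Bool → ℝ :=
      fun i b => if h : i < N then A ⟨i, h⟩ (if b then 1 else 0) ω else 1 with hf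
    have hPf : ∀ k, P k ω = ∏ i ∈ Finset.range N, f i (k.testBit i) := by
      intro k
      rw [← Fin.prod_univ_eq_prod_range (fun i => f i (k.testBit i)) N, hP]
      exact Finset.prod_congr rfl fun i _ => by simp [hf, i.isLt]
    have hG' : ∀ j, G j ω
        = ∏ i ∈ Finset.range N,
            (f i false + (-1 : ℝ) ^ (if j.testBit i then 1 else 0) * f i true) := by
      intro j
      rw [hGdef]
      simp only [hPf]
      exact key1 N j f
    rw [Finset.sum_congr rfl fun j _ => by rw [hG' j],
      key2 N (fun i => f i false) (fun i => f i true)]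
    have h2 : ∀ i ∈ Finset.range N, |f i false + f i true| + |f i false - f i true| = 2 := by
      intro i hi
      have hiN : i < N := Finset.mem_range.mp hi
      have hfalse : f i false = A ⟨i, hiN⟩ 0 ω := by simp [hf, hiN]
      have htrue : f i true = A ⟨i, hiN⟩ 1 ω := by simp [hf, hiN]
      rw [hfalse, htrue]
      rcases hval ⟨i, hiN⟩ 0 ω with h1 | h1 <;> rcases hval ⟨i, hiN⟩ 1 ω with h2 | h2 <;>
        rw [h1, h2] <;> norm_num
    rw [Finset.prod_congr rfl h2, Finset.prod_const, Finset.card_range]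
  calc |∑ k ∈ Finset.range (2 ^ N), (a k : ℝ) * ∫ ω, P k ω ∂μ|
      = |∑ j ∈ Finset.range (2 ^ N), (c j : ℝ) * ∫ ω, G j ω ∂μ| := by
        congr 1
        calc ∑ k ∈ Finset.range (2 ^ N), (a k : ℝ) * ∫ ω, P k ω ∂μ
            = ∑ k ∈ Finset.range (2 ^ N), ∑ j ∈ Finset.range (2 ^ N),
                ((-1 : ℝ) ^ ip N j k * (c j : ℝ)) * ∫ ω, P k ω ∂μ := by
              refine Finset.sum_congr rfl fun k hk => ?_
              rw [ha k (Finset.mem_range.mp hk)]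
              push_cast
              rw [Finset.sum_mul]
          _ = ∑ j ∈ Finset.range (2 ^ N), ∑ k ∈ Finset.range (2 ^ N),
                ((-1 : ℝ) ^ ip N j k * (c j : ℝ)) * ∫ ω, P k ω ∂μ := Finset.sum_comm
          _ = ∑ j ∈ Finset.range (2 ^ N), (c j : ℝ) * ∫ ω, G j ω ∂μ := by
              refine Finset.sum_congr rfl fun j _ => ?_
              rw [hIG j, Finset.mul_sum]
              exact Finset.sum_congr rfl fun k _ => by ring
    _ ≤ ∑ j ∈ Finset.range (2 ^ N), |(c j : ℝ) * ∫ ω, G j ω ∂μ| :=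
        Finset.abs_sum_le_sum_abs _ _
    _ = ∑ j ∈ Finset.range (2 ^ N), |∫ ω, G j ω ∂μ| := by
        refine Finset.sum_congr rfl fun j hj => ?_
        rw [abs_mul, hcabs j hj, one_mul]
    _ ≤ ∑ j ∈ Finset.range (2 ^ N), ∫ ω, |G j ω| ∂μ := by
        refine Finset.sum_le_sum fun j _ => ?_
        simpa [Real.norm_eq_abs] using norm_integral_le_integral_norm (G j)
    _ = ∫ ω, ∑ j ∈ Finset.range (2 ^ N), |G j ω| ∂μ :=
        (integral_finset_sum _ fun j _ => (hGint j).abs).symm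
    _ = ∫ _ω, (2 : ℝ) ^ N ∂μ := by
        exact integral_congr_ae (Filter.Eventually.of_forall fun ω => hpoint ω)
    _ = 2 ^ N := by simp
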